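/- Let G = (V, E) be a graph on n vertices and let k ≤ n. Define an instance of Seat Arrangement with agents P = V, binary symmetric preferences f_u(v) = f_v(u) = 1 if {u,v} ∈ E and 0 otherwise, and seat graph G' equal to the disjoint union of a clique on k vertices and n − k isolated vertices. Then G contains a clique of size k if and only if there is an arrangement π in G' with social welfare sw(π) = k(k − 1). -/

import Mathlib

open scoped Classical

noncomputable section

namespace SeatArrangement

variable {P V : Type*}

/-- The utility of agent `p` under arrangement `π`:
the sum, over the seat-graph neighbors `v` of `π p`, of `p`'s preference for the agent seated
at `v`. -/
def utility [Fintype V] (G : SimpleGraph V) (f : P → P → ℝ) (π : P ≃ V) (p : P) : ℝ :=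
  ∑ v : V, if G.Adj (π p) v then f p (π.symm v) else 0

/-- The social welfare of an arrangement: the sum of the utilities of all agents. -/
def sw [Fintype P] [Fintype V] (G : SimpleGraph V) (f : P → P → ℝ) (π : P ≃ V) : ℝ :=
  ∑ p : P, utility G f π p

/-- The `(p,q)`-swap arrangement of `π`. -/
def swapArr (π : P ≃ V) (p q : P) : P ≃ V := (Equiv.swap p q).trans π

/-- `{p, q}` is a blocking pair for `π`: both agents strictly improve by swapping seats. -/
def blocking [Fintype V] (G : SimpleGraph V) (f : P → P → ℝ) (π : P ≃ V) (p q : P) : Prop :=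
  p ≠ q ∧ utility G f π p < utility G f (swapArr π p q) p
        ∧ utility G f π q < utility G f (swapArr π p q) q

/-- An arrangement is stable if it has no blocking pair. -/
def stable [Fintype V] (G : SimpleGraph V) (f : P → P → ℝ) (π : P ≃ V) : Prop :=
  ∀ p q : P, ¬ blocking G f π p q

/-- An arrangement is envy-free if no agent would strictly improve by taking
another agent's seat (via a swap). -/
def envyFree [Fintype V] (G : SimpleGraph V) (f : P → P → ℝ) (π : P ≃ V) : Prop :=
  ∀ p q : P, p ≠ q → utility G f (swapArr π p q) p ≤ utility G f π p

/-- The least utility of an agent under `π` (for a finite nonempty set of agents, the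
infimum of the range of utilities is the minimum utility). -/
def minUtil [Fintype V] (G : SimpleGraph V) (f : P → P → ℝ) (π : P ≃ V) : ℝ :=
  sInf (Set.range (utility G f π))

/-- A maximin arrangement maximizes the least utility of an agent. -/
def maximin [Fintype V] (G : SimpleGraph V) (f : P → P → ℝ) (πf : P ≃ V) : Prop :=
  ∀ π : P ≃ V, minUtil G f π ≤ minUtil G f πf

/-- A maximum arrangement maximizes the social welfare. -/
def maximum [Fintype P] [Fintype V] (G : SimpleGraph V) (f : P → P → ℝ) (πm : P ≃ V) : Prop :=
  ∀ π : P ≃ V, sw G f π ≤ sw G f πm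

end SeatArrangement

open SeatArrangement

/-- The seat graph for STATEMENT 16: a clique on the first `k` of `n` vertices together
with `n - k` isolated vertices. -/
def cliquePlusIsolated (n k : ℕ) : SimpleGraph (Fin n) where
  Adj i j := i ≠ j ∧ i.val < k ∧ j.val < k
  symm := by
    constructor
    rintro i j ⟨h1, h2, h3⟩
    exact ⟨h1.symm, h3, h2⟩
  loopless := by
    constructor
    rintro i ⟨h1, -⟩
    exact h1 rfl

lemma seatT_card (n k : ℕ) (hk : k ≤ n) :
    (Finset.univ.filter fun i : Fin n => i.val < k).card = k := by
  have : (Finset.univ.filter fun i : Fin n => i.val < k)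
      = Finset.map (Fin.castLEEmb hk) Finset.univ := by
    ext i
    simp only [Finset.mem_filter, Finset.mem_univ, true_and, Finset.mem_map,
      Fin.castLEEmb_apply]
    constructor
    · intro h; exact ⟨⟨i.val, h⟩, Fin.ext rfl⟩
    · rintro ⟨j, rfl⟩; simpa using j.isLt
  rw [this]; simp

lemma sw_eq {W : Type*} [Fintype W] [DecidableEq W] (n k : ℕ)
    (f : W → W → ℝ) (π : W ≃ Fin n) :
    sw (cliquePlusIsolated n k) f π
      = ∑ p ∈ (Finset.univ.filter fun i : Fin n => i.val < k).offDiag,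
          f (π.symm p.1) (π.symm p.2) := by
  unfold sw utility
  rw [Fintype.sum_equiv π _ (fun i : Fin n =>
      ∑ v : Fin n, if (cliquePlusIsolated n k).Adj i v then f (π.symm i) (π.symm v) else 0)
      (fun p => by simp)]
  rw [← Finset.sum_product']
  have hset : (Finset.univ ×ˢ Finset.univ : Finset (Fin n × Fin n)).filter
      (fun x => (cliquePlusIsolated n k).Adj x.1 x.2)
      = (Finset.univ.filter fun i : Fin n => i.val < k).offDiag := by
    ext x
    rw [Finset.mem_filter]
    simp [cliquePlusIsolated, Finset.mem_offDiag]
    tauto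
  rw [← hset, Finset.sum_filter]

/-- for a graph `G` on `n` vertices and `k ≤ n`, with agents `V(G)`, binary
symmetric preferences given by adjacency in `G`, and seat graph a clique on `k` vertices
plus `n − k` isolated vertices, `G` has a clique of size `k` if and only if some arrangement
has social welfare `k(k − 1)`. -/
theorem clique_iff_max_welfare {W : Type*} [Fintype W] [DecidableEq W]
    (G : SimpleGraph W) (k : ℕ) (hk : k ≤ Fintype.card W) :
    (∃ S : Finset W, G.IsNClique k S) ↔
    (∃ π : W ≃ Fin (Fintype.card W),
      sw (cliquePlusIsolated (Fintype.card W) k)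
        (fun u v => if G.Adj u v then 1 else 0) π = (k : ℝ) * ((k : ℝ) - 1)) := by
  set n := Fintype.card W with hn
  set T := (Finset.univ.filter fun i : Fin n => i.val < k) with hT
  have hTcard : T.card = k := seatT_card n k hk
  have hkk : k ≤ k * k := by nlinarith
  constructor
  · rintro ⟨S, hS⟩
    have hScard : S.card = k := hS.card_eq
    have hc1 : S.card = T.card := by rw [hScard, hTcard]
    have hc2 : Sᶜ.card = Tᶜ.card := by
      rw [Finset.card_compl, Finset.card_compl, hScard, hTcard]
      simp [hn]
    let e1 : {x : W // x ∈ S} ≃ {i : Fin n // i ∈ T} := Finset.equivOfCardEq hc1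
    let e2 : {x : W // ¬ x ∈ S} ≃ {i : Fin n // ¬ i ∈ T} :=
      ((Equiv.subtypeEquivRight fun x => Finset.mem_compl).symm.trans
        (Finset.equivOfCardEq hc2)).trans (Equiv.subtypeEquivRight fun i => Finset.mem_compl)
    let π : W ≃ Fin n := (Equiv.sumCompl (· ∈ S)).symm.trans
      ((e1.sumCongr e2).trans (Equiv.sumCompl (· ∈ T)))
    have hmem : ∀ x : W, x ∈ S ↔ π x ∈ T := by
      intro x
      by_cases h : x ∈ S
      · have hx : π x = ((e1 ⟨x, h⟩ : {i // i ∈ T}) : Fin n) := by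
          simp [π, Equiv.sumCompl_symm_apply_of_pos (p := (· ∈ S)) h]
        simp [h, hx, (e1 ⟨x, h⟩).2]
      · have hx : π x = ((e2 ⟨x, h⟩ : {i // ¬ i ∈ T}) : Fin n) := by
          simp [π, Equiv.sumCompl_symm_apply_of_neg (p := (· ∈ S)) h]
        simp [h, hx, (e2 ⟨x, h⟩).2]
    have hmem' : ∀ i ∈ T, π.symm i ∈ S := by
      intro i hi
      exact (hmem (π.symm i)).mpr (by simpa using hi)
    refine ⟨π, ?_⟩
    rw [sw_eq]
    have hall : ∀ p ∈ T.offDiag,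
        (fun u v => if G.Adj u v then (1:ℝ) else 0) (π.symm p.1) (π.symm p.2) = 1 := by
      rintro ⟨i, j⟩ hp
      rw [Finset.mem_offDiag] at hp
      have h1 : π.symm i ∈ S := hmem' _ hp.1
      have h2 : π.symm j ∈ S := hmem' _ hp.2.1
      have hne : π.symm i ≠ π.symm j := fun h => hp.2.2 (by simpa using congrArg π h)
      simp [hS.isClique h1 h2 hne]
    rw [Finset.sum_congr rfl hall, Finset.sum_const, Finset.offDiag_card, hTcard,
      nsmul_eq_mul]
    push_cast [Nat.cast_sub hkk]
    ring
  · rintro ⟨π, hπ⟩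
    rw [sw_eq] at hπ
    have hcard : (T.offDiag).card = k * k - k := by rw [Finset.offDiag_card, hTcard]
    have hterm : ∀ p ∈ T.offDiag,
        (1:ℝ) - (if G.Adj (π.symm p.1) (π.symm p.2) then (1:ℝ) else 0) = 0 := by
      have hnn : ∀ p ∈ T.offDiag,
          (0:ℝ) ≤ 1 - (if G.Adj (π.symm p.1) (π.symm p.2) then (1:ℝ) else 0) := by
        intro p _; split <;> norm_num
      have hz : ∑ p ∈ T.offDiag,
          ((1:ℝ) - (if G.Adj (π.symm p.1) (π.symm p.2) then (1:ℝ) else 0)) = 0 := by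
        rw [Finset.sum_sub_distrib, hπ, Finset.sum_const, hcard, nsmul_eq_mul]
        push_cast [Nat.cast_sub hkk]
        ring
      exact (Finset.sum_eq_zero_iff_of_nonneg hnn).mp hz
    refine ⟨T.image (fun i => π.symm i), ?_⟩
    rw [SimpleGraph.isNClique_iff]
    constructor
    · intro x hx y hy hxy
      simp only [Finset.coe_image, Set.mem_image, Finset.mem_coe] at hx hy
      obtain ⟨i, hi, rfl⟩ := hx
      obtain ⟨j, hj, rfl⟩ := hy
      have hij : i ≠ j := fun h => hxy (by rw [h])
      have := hterm (i, j) (Finset.mem_offDiag.mpr ⟨hi, hj, hij⟩)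
      by_contra hadj
      rw [if_neg hadj] at this
      norm_num at this
    · rw [Finset.card_image_of_injective _ π.symm.injective, hTcard]
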